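/- Let Φ be a quantum operation on 2×2 complex matrices. Then Φ is a maximally incoherent operation (i.e. Φ(δ) is diagonal for every diagonal qubit density matrix δ) if and only if C_{l1}(Φ(ρ)) ≤ C_{l1}(ρ) for every qubit density matrix ρ. In particular, the l1-coherence is monotone (non-increasing) under MIO, and hence under DIO, on single qubit systems. -/

import Mathlib

open Matrix BigOperators ComplexOrder

/-- The l1-coherence of a matrix: the sum of the absolute values of its
off-diagonal entries. -/
noncomputable def Cl1 {n : ℕ} (A : Matrix (Fin n) (Fin n) ℂ) : ℝ :=
  ∑ i, ∑ j, if i ≠ j then ‖A i j‖ else 0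

/-- A density matrix: positive semidefinite with trace 1. -/
def IsDensity {n : ℕ} (ρ : Matrix (Fin n) (Fin n) ℂ) : Prop :=
  ρ.PosSemidef ∧ ρ.trace = 1

/-- A quantum operation (CPTP map) given by a finite family of Kraus operators. -/
def IsQuantumOp {n : ℕ} (Φ : Matrix (Fin n) (Fin n) ℂ → Matrix (Fin n) (Fin n) ℂ) : Prop :=
  ∃ (m : ℕ) (K : Fin m → Matrix (Fin n) (Fin n) ℂ),
    (∑ i, (K i)ᴴ * K i) = 1 ∧ ∀ ρ, Φ ρ = ∑ i, K i * ρ * (K i)ᴴ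

/-- The dephasing map `Δ`, keeping only the diagonal part of a matrix. -/
def Deph {n : ℕ} (A : Matrix (Fin n) (Fin n) ℂ) : Matrix (Fin n) (Fin n) ℂ :=
  Matrix.of fun i j => if i = j then A i j else 0

lemma cl1_two (A : Matrix (Fin 2) (Fin 2) ℂ) :
    Cl1 A = ‖A 0 1‖ + ‖A 1 0‖ := by
  simp [Cl1, Fin.sum_univ_two]

lemma cl1_of_isDiag {A : Matrix (Fin 2) (Fin 2) ℂ} (h : A.IsDiag) : Cl1 A = 0 := by
  rw [cl1_two, h (by decide : (0:Fin 2) ≠ 1), h (by decide : (1:Fin 2) ≠ 0)]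
  simp

lemma isDiag_of_cl1_nonpos {A : Matrix (Fin 2) (Fin 2) ℂ} (h : Cl1 A ≤ 0) : A.IsDiag := by
  rw [cl1_two] at h
  have h1 : ‖A 0 1‖ = 0 ∧ ‖A 1 0‖ = 0 := by
    constructor <;> nlinarith [norm_nonneg (A 0 1), norm_nonneg (A 1 0)]
  have e1 : A 0 1 = 0 := by simpa using h1.1
  have e2 : A 1 0 = 0 := by simpa using h1.2
  intro i j hij
  fin_cases i <;> fin_cases j <;> simp_all

lemma psd_offdiag_le {τ : Matrix (Fin 2) (Fin 2) ℂ} (h : τ.PosSemidef) :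
    2 * ‖τ 0 1‖ ≤ τ.trace.re := by
  set c := τ 0 1 with hc
  have h10 : τ 1 0 = starRingEnd ℂ c := (h.isHermitian.apply 1 0).symm
  by_cases hc0 : c = 0
  · have d0 := h.dotProduct_mulVec_nonneg (Pi.single 0 1)
    have d1 := h.dotProduct_mulVec_nonneg (Pi.single 1 1)
    simp [dotProduct, mulVec, Fin.sum_univ_two, Pi.single_apply] at d0 d1
    rw [Complex.le_def] at d0 d1
    norm_num at d0 d1
    simp [Matrix.trace, Matrix.diag, Fin.sum_univ_two, hc0]
    linarith [d0.1, d1.1]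
  · set s := ‖c‖ with hs
    have hs0 : (0:ℝ) < s := norm_pos_iff.mpr hc0
    have hsne : (s:ℂ) ≠ 0 := by exact_mod_cast hs0.ne'
    have hcc : c * starRingEnd ℂ c = (s:ℂ) * (s:ℂ) := by
      rw [Complex.mul_conj, Complex.normSq_eq_norm_sq]; push_cast; ring
    have key := h.dotProduct_mulVec_nonneg ![1, -(starRingEnd ℂ c) / s]
    have hexp : dotProduct (star ![1, -(starRingEnd ℂ c) / s])
        (τ *ᵥ ![1, -(starRingEnd ℂ c) / s]) = τ 0 0 + τ 1 1 - 2 * (s:ℂ) := by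
      simp [dotProduct, mulVec, Fin.sum_univ_two, h10, ← hc]
      field_simp
      ring_nf
      linear_combination (-2*(s:ℂ) + τ 1 1) * hcc
    rw [hexp, Complex.le_def] at key
    simp at key
    simp [Matrix.trace, Matrix.diag, Fin.sum_univ_two]
    linarith [key.1]

theorem l1_monotone_iff_MIO_qubit
    (Φ : Matrix (Fin 2) (Fin 2) ℂ → Matrix (Fin 2) (Fin 2) ℂ)
    (hΦ : IsQuantumOp Φ) :
    ((∀ δ : Matrix (Fin 2) (Fin 2) ℂ, IsDensity δ → δ.IsDiag → (Φ δ).IsDiag) ↔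
      (∀ ρ : Matrix (Fin 2) (Fin 2) ℂ, IsDensity ρ → Cl1 (Φ ρ) ≤ Cl1 ρ)) ∧
    ((∀ A : Matrix (Fin 2) (Fin 2) ℂ, Φ (Deph A) = Deph (Φ A)) →
      ∀ ρ : Matrix (Fin 2) (Fin 2) ℂ, IsDensity ρ → Cl1 (Φ ρ) ≤ Cl1 ρ) := by
  obtain ⟨m, K, hK, hrep⟩ := hΦ
  -- linearity
  have hadd : ∀ A B, Φ (A + B) = Φ A + Φ B := by
    intro A B
    rw [hrep, hrep, hrep, ← Finset.sum_add_distrib]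
    congr 1; ext i : 1
    rw [Matrix.mul_add, Matrix.add_mul]
  have hsmul : ∀ (z : ℂ) A, Φ (z • A) = z • Φ A := by
    intro z A
    rw [hrep, hrep, Finset.smul_sum]
    congr 1; ext i : 1
    rw [Matrix.mul_smul, Matrix.smul_mul]
  -- trace preservation
  have htrace : ∀ A, (Φ A).trace = A.trace := by
    intro A
    rw [hrep, Matrix.trace_sum]
    calc ∑ i, (K i * A * (K i)ᴴ).trace = ∑ i, ((K i)ᴴ * K i * A).trace := by
          refine Finset.sum_congr rfl fun i _ => ?_
          rw [Matrix.trace_mul_cycle]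
      _ = ((∑ i, (K i)ᴴ * K i) * A).trace := by rw [Finset.sum_mul, Matrix.trace_sum]
      _ = A.trace := by rw [hK, Matrix.one_mul]
  -- PSD preservation
  have hpsd : ∀ {A}, A.PosSemidef → (Φ A).PosSemidef := by
    intro A hA
    rw [hrep]
    induction (Finset.univ : Finset (Fin m)) using Finset.induction with
    | empty => simpa using Matrix.PosSemidef.zero
    | insert _ _ h ih =>
      rw [Finset.sum_insert h]
      exact (hA.mul_mul_conjTranspose_same _).add ih
  -- MIO implies Φ sends arbitrary diagonal matrices to diagonal matrices
  have hdiagstd : (∀ δ : Matrix (Fin 2) (Fin 2) ℂ, IsDensity δ → δ.IsDiag → (Φ δ).IsDiag) →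
      ∀ A : Matrix (Fin 2) (Fin 2) ℂ, A.IsDiag → (Φ A).IsDiag := by
    intro hMIO A hA
    have hE0 : IsDensity (Matrix.diagonal ![(1:ℂ), 0]) := by
      refine ⟨Matrix.PosSemidef.diagonal fun i => ?_, by
        simp [Matrix.trace_diagonal, Fin.sum_univ_two]⟩
      fin_cases i <;> simp
    have hE1 : IsDensity (Matrix.diagonal ![(0:ℂ), 1]) := by
      refine ⟨Matrix.PosSemidef.diagonal fun i => ?_, by
        simp [Matrix.trace_diagonal, Fin.sum_univ_two]⟩
      fin_cases i <;> simp
    have hsplit : A = A 0 0 • Matrix.diagonal ![(1:ℂ), 0] + A 1 1 • Matrix.diagonal ![(0:ℂ), 1] := by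
      ext i j
      by_cases hij : i = j
      · subst hij; fin_cases i <;> simp [Matrix.diagonal]
      · rw [hA hij]; fin_cases i <;> fin_cases j <;> simp_all [Matrix.diagonal]
    rw [hsplit, hadd, hsmul, hsmul]
    exact ((hMIO _ hE0 (Matrix.isDiag_diagonal _)).smul _).add
      ((hMIO _ hE1 (Matrix.isDiag_diagonal _)).smul _)
  -- the main forward implication
  have hfwd : (∀ δ : Matrix (Fin 2) (Fin 2) ℂ, IsDensity δ → δ.IsDiag → (Φ δ).IsDiag) →
      ∀ ρ : Matrix (Fin 2) (Fin 2) ℂ, IsDensity ρ → Cl1 (Φ ρ) ≤ Cl1 ρ := by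
    intro hMIO ρ hρ
    obtain ⟨hρpsd, hρtr⟩ := hρ
    set c := ρ 0 1 with hc
    have h10 : ρ 1 0 = starRingEnd ℂ c := (hρpsd.isHermitian.apply 1 0).symm
    by_cases hc0 : c = 0
    · have hdiag : ρ.IsDiag := by
        have e01 : ρ 0 1 = 0 := by rw [← hc]; exact hc0
        have e10 : ρ 1 0 = 0 := by rw [h10, hc0]; simp
        intro i j hij
        fin_cases i <;> fin_cases j <;>
          first
          | exact absurd rfl hij
          | exact e01
          | exact e10
      rw [cl1_of_isDiag (hdiagstd hMIO ρ hdiag), cl1_of_isDiag hdiag]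
    · set s := ‖c‖ with hs
      have hs0 : (0:ℝ) < s := norm_pos_iff.mpr hc0
      have hsne : (s:ℂ) ≠ 0 := by exact_mod_cast hs0.ne'
      have hcc : c * starRingEnd ℂ c = (s:ℂ) * (s:ℂ) := by
        rw [Complex.mul_conj, Complex.normSq_eq_norm_sq]; push_cast; ring
      -- the rank-one coherent part
      set B : Matrix (Fin 2) (Fin 2) ℂ :=
        !![(Real.sqrt s : ℂ), Real.sqrt s * (c / s); 0, 0] with hB
      set σ : Matrix (Fin 2) (Fin 2) ℂ := Bᴴ * B with hσ
      have hσpsd : σ.PosSemidef := Matrix.posSemidef_conjTranspose_mul_self B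
      have hsq : (Real.sqrt s : ℂ) * (Real.sqrt s : ℂ) = (s:ℂ) := by
        exact_mod_cast congrArg Complex.ofReal (Real.mul_self_sqrt hs0.le)
      have hσ01 : σ 0 1 = c := by
        simp [hσ, hB, Matrix.mul_apply, Fin.sum_univ_two, Matrix.conjTranspose_apply,
          Complex.conj_ofReal]
        rw [← mul_assoc, hsq]
        field_simp
      have hσ10 : σ 1 0 = starRingEnd ℂ c := by
        simp [hσ, hB, Matrix.mul_apply, Fin.sum_univ_two, Matrix.conjTranspose_apply,
          _root_.map_mul, map_div₀, Complex.conj_ofReal]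
        field_simp
        linear_combination (starRingEnd ℂ c) * hsq
      have hσtr : σ.trace = 2 * (s:ℂ) := by
        simp [hσ, hB, Matrix.trace, Matrix.diag, Matrix.mul_apply, Fin.sum_univ_two,
          Matrix.conjTranspose_apply, _root_.map_mul, map_div₀, Complex.conj_ofReal]
        field_simp
        linear_combination ((s:ℂ)^2 + (starRingEnd ℂ c) * c) * hsq + (s:ℂ) * hcc
      have hδ01 : (ρ - σ) 0 1 = 0 := by
        rw [Matrix.sub_apply, ← hc, hσ01, sub_self]
      have hδ10 : (ρ - σ) 1 0 = 0 := by
        rw [Matrix.sub_apply, h10, hσ10, sub_self]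
      have hδdiag : (ρ - σ).IsDiag := by
        intro i j hij
        fin_cases i <;> fin_cases j <;>
          first
          | exact absurd rfl hij
          | exact hδ01
          | exact hδ10
      have hsum : Φ ρ = Φ σ + Φ (ρ - σ) := by
        have h := hadd σ (ρ - σ)
        rw [add_comm σ (ρ - σ), sub_add_cancel] at h
        exact h
      have hΦδdiag := hdiagstd hMIO (ρ - σ) hδdiag
      have e01 : (Φ ρ) 0 1 = (Φ σ) 0 1 := by
        rw [hsum, Matrix.add_apply, hΦδdiag (show (0:Fin 2) ≠ 1 by decide), add_zero]
      have e10 : (Φ ρ) 1 0 = (Φ σ) 1 0 := by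
        rw [hsum, Matrix.add_apply, hΦδdiag (show (1:Fin 2) ≠ 0 by decide), add_zero]
      have hΦσpsd := hpsd hσpsd
      have h2 : 2 * ‖(Φ σ) 0 1‖ ≤ (Φ σ).trace.re := psd_offdiag_le hΦσpsd
      have htr2 : (Φ σ).trace.re = 2 * s := by
        rw [htrace, hσtr]
        simp
      have e2 : (Φ σ) 1 0 = starRingEnd ℂ ((Φ σ) 0 1) :=
        (hΦσpsd.isHermitian.apply 1 0).symm
      rw [cl1_two, cl1_two, e01, e10, e2, Complex.norm_conj, h10, Complex.norm_conj, ← hc, ← hs]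
      linarith
  constructor
  · constructor
    · exact hfwd
    · intro hmono δ hδ hδdiag
      have := hmono δ hδ
      rw [cl1_of_isDiag hδdiag] at this
      exact isDiag_of_cl1_nonpos this
  · intro hDIO
    apply hfwd
    intro δ hδ hδdiag
    have hfix : Deph δ = δ := by
      ext i j
      by_cases hij : i = j
      · simp [Deph, hij]
      · simp [Deph, hij, hδdiag hij]
    have hΔ : Φ δ = Deph (Φ δ) := by
      calc Φ δ = Φ (Deph δ) := by rw [hfix]
        _ = Deph (Φ δ) := hDIO δ
    rw [hΔ]
    intro i j hij
    simp [Deph, hij]
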